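/- Let G be a maximal outerplane graph on Fin n and let R ⊆ Fin n. Then there exists a set M of pairwise disjoint, pairwise non-crossing chords, each chord of M joining two vertices of R and no chord of M being an edge of G, such that at most four vertices of R are not covered by M. -/

import Mathlib

/-- `x` lies strictly inside the open clockwise arc from `a` to `b` on the convex
`n`-gon whose vertices are `Fin n` in clockwise cyclic order. -/
def InArc (n : ℕ) (a b x : Fin n) : Prop :=
  0 < (x - a).val ∧ (x - a).val < (b - a).val

/-- Two chords of the convex `n`-gon cross: their four endpoints are distinct and
interleave in the cyclic order, i.e. one endpoint of the second chord lies strictly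
inside each of the two open arcs determined by the first chord. -/
def Cross (n : ℕ) (e f : Sym2 (Fin n)) : Prop :=
  ∃ a b c d : Fin n, e = s(a, b) ∧ f = s(c, d) ∧ InArc n a b c ∧ InArc n b a d

/-- A boundary edge of the convex `n`-gon: a chord of the form `{i, i+1 (mod n)}`. -/
def IsBoundaryEdge (n : ℕ) (e : Sym2 (Fin n)) : Prop :=
  ∃ i j : Fin n, e = s(i, j) ∧ (j - i).val = 1

/-- A diagonal of the convex `n`-gon: a chord (pair of distinct vertices) that is not
a boundary edge. -/
def IsDiagonal (n : ℕ) (e : Sym2 (Fin n)) : Prop :=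
  ¬ e.IsDiag ∧ ¬ IsBoundaryEdge n e

/-- A maximal outerplane graph (MOP) on `Fin n` (`n ≥ 3`): a simple graph whose edge
set consists of all `n` boundary edges together with `n - 3` pairwise non-crossing
diagonals. -/
def IsMOP (n : ℕ) (G : SimpleGraph (Fin n)) : Prop :=
  3 ≤ n ∧
  (∀ e, IsBoundaryEdge n e → e ∈ G.edgeSet) ∧
  (∀ e ∈ G.edgeSet, IsBoundaryEdge n e ∨ IsDiagonal n e) ∧
  (∀ e ∈ G.edgeSet, ∀ f ∈ G.edgeSet, ¬ Cross n e f) ∧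
  {e ∈ G.edgeSet | IsDiagonal n e}.ncard = n - 3

lemma fin_sub_val {n : ℕ} (a b : Fin n) :
    (a - b).val = if b.val ≤ a.val then a.val - b.val else a.val + n - b.val := by
  have hn : 0 < n := a.pos
  have ha := a.isLt
  have hb := b.isLt
  rw [Fin.sub_def]
  simp only
  split_ifs with h
  · have h1 : n - b.val + a.val = (a.val - b.val) + n := by omega
    rw [h1, Nat.add_mod_right, Nat.mod_eq_of_lt (by omega)]
  · rw [Nat.mod_eq_of_lt (by omega)]
    omega

lemma arc_total {n : ℕ} {a b w : Fin n} (hab : a ≠ b) (hwa : w ≠ a) (hwb : w ≠ b) :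
    InArc n a b w ∨ InArc n b a w := by
  have ha := a.isLt; have hb := b.isLt; have hw := w.isLt
  have h1 : a.val ≠ b.val := fun h => hab (Fin.ext h)
  have h2 : w.val ≠ a.val := fun h => hwa (Fin.ext h)
  have h3 : w.val ≠ b.val := fun h => hwb (Fin.ext h)
  simp only [InArc, fin_sub_val]
  split_ifs <;> omega

lemma arc_antisymm {n : ℕ} {a b w : Fin n} (h1 : InArc n a b w) (h2 : InArc n b a w) : False := by
  have ha := a.isLt; have hb := b.isLt; have hw := w.isLt
  simp only [InArc, fin_sub_val] at h1 h2
  split_ifs at h1 h2 <;> omega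

lemma arc_ne_left {n : ℕ} {a b w : Fin n} (h : InArc n a b w) : w ≠ a := by
  have ha := a.isLt; have hw := w.isLt
  intro he
  simp only [InArc, fin_sub_val, he] at h
  split_ifs at h <;> omega

lemma arc_ne_right {n : ℕ} {a b w : Fin n} (h : InArc n a b w) : w ≠ b := by
  have ha := a.isLt; have hw := w.isLt; have hb := b.isLt
  intro he
  simp only [InArc, fin_sub_val, he] at h
  split_ifs at h <;> omega

lemma arc_ne_ab {n : ℕ} {a b w : Fin n} (h : InArc n a b w) : a ≠ b := by
  have ha := a.isLt; have hw := w.isLt; have hb := b.isLt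
  intro he
  simp only [InArc, fin_sub_val, he] at h
  split_ifs at h <;> omega


lemma sub_val_pos {n : ℕ} {a x : Fin n} (h : x ≠ a) : 0 < (x - a).val := by
  have ha := a.isLt; have hx := x.isLt
  have : x.val ≠ a.val := fun he => h (Fin.ext he)
  rw [fin_sub_val]; split_ifs <;> omega

lemma sub_val_inj {n : ℕ} {a x y : Fin n} (h : (x - a).val = (y - a).val) : x = y := by
  have ha := a.isLt; have hx := x.isLt; have hy := y.isLt
  rw [fin_sub_val, fin_sub_val] at h
  apply Fin.ext
  split_ifs at h <;> omega

lemma nc_bound : ∀ (N : ℕ) {n : ℕ} (R : Finset (Fin n)) (F : Finset (Sym2 (Fin n))),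
    R.card = N → 2 ≤ R.card →
    (∀ e ∈ F, ¬ e.IsDiag) →
    (∀ e ∈ F, ∀ v ∈ e, v ∈ R) →
    (∀ e ∈ F, ∀ f ∈ F, ¬ Cross n e f) →
    F.card ≤ 2 * R.card - 3 := by
  intro N
  induction N using Nat.strong_induction_on with
  | _ N ih =>
  intro n R F hN hR2 hd hmem hnc
  classical
  by_cases h2 : R.card = 2
  · -- R = {u, v}
    obtain ⟨u, v, huv, hRuv⟩ := Finset.card_eq_two.mp h2
    have hsub : F ⊆ {s(u, v)} := by
      intro e he
      induction e using Sym2.ind with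
      | _ x y =>
        have hx : x ∈ R := hmem _ he x (by simp)
        have hy : y ∈ R := hmem _ he y (by simp)
        have hxy : x ≠ y := by
          intro h; exact hd _ he (by simp [h, Sym2.isDiag_iff_proj_eq])
        rw [hRuv] at hx hy
        simp only [Finset.mem_insert, Finset.mem_singleton] at hx hy
        simp only [Finset.mem_singleton]
        rcases hx with rfl | rfl <;> rcases hy with rfl | rfl
        · exact absurd rfl hxy
        · rfl
        · exact Sym2.eq_swap
        · exact absurd rfl hxy
    calc F.card ≤ 1 := by
          simpa using Finset.card_le_card hsub
      _ ≤ 2 * R.card - 3 := by omega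
  · have hR3 : 3 ≤ R.card := by omega
    by_cases htwo : ∃ e ∈ F, ∃ a b : Fin n, e = s(a, b) ∧
        (∃ x ∈ R, InArc n a b x) ∧ (∃ y ∈ R, InArc n b a y)
    · -- split case
      obtain ⟨e₀, he₀, a, b, he₀ab, ⟨x₀, hx₀R, hx₀⟩, ⟨y₀, hy₀R, hy₀⟩⟩ := htwo
      have hab : a ≠ b := arc_ne_ab hx₀
      have haR : a ∈ R := hmem _ he₀ a (by rw [he₀ab]; simp)
      have hbR : b ∈ R := hmem _ he₀ b (by rw [he₀ab]; simp)
      set R₁ := R.filter (fun v => v = a ∨ v = b ∨ InArc n a b v) with hR₁def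
      set R₂ := R.filter (fun v => v = a ∨ v = b ∨ InArc n b a v) with hR₂def
      set F₁ := F.filter (fun e => ∀ v ∈ e, v ∈ R₁) with hF₁def
      set F₂ := F.filter (fun e => ∀ v ∈ e, v ∈ R₂) with hF₂def
      have haR₁ : a ∈ R₁ := by simp [hR₁def, haR]
      have hbR₁ : b ∈ R₁ := by simp [hR₁def, hbR]
      have haR₂ : a ∈ R₂ := by simp [hR₂def, haR]
      have hbR₂ : b ∈ R₂ := by simp [hR₂def, hbR]
      have hx₀R₁ : x₀ ∈ R₁ := by simp [hR₁def, hx₀R, hx₀]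
      have hy₀R₂ : y₀ ∈ R₂ := by simp [hR₂def, hy₀R, hy₀]
      have hx₀a : x₀ ≠ a := arc_ne_left hx₀
      have hx₀b : x₀ ≠ b := arc_ne_right hx₀
      have hy₀a : y₀ ≠ a := arc_ne_right hy₀
      have hy₀b : y₀ ≠ b := arc_ne_left hy₀
      have hy₀R₁ : y₀ ∉ R₁ := by
        simp only [hR₁def, Finset.mem_filter, not_and, not_or]
        intro _
        exact ⟨hy₀a, hy₀b, fun h => arc_antisymm h hy₀⟩
      have hx₀R₂ : x₀ ∉ R₂ := by
        simp only [hR₂def, Finset.mem_filter, not_and, not_or]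
        intro _
        exact ⟨hx₀a, hx₀b, fun h => arc_antisymm hx₀ h⟩
      have hR₁sub : R₁ ⊆ R := Finset.filter_subset _ _
      have hR₂sub : R₂ ⊆ R := Finset.filter_subset _ _
      have hR₁lt : R₁.card < R.card :=
        Finset.card_lt_card ⟨hR₁sub, fun hs => hy₀R₁ (hs hy₀R)⟩
      have hR₂lt : R₂.card < R.card :=
        Finset.card_lt_card ⟨hR₂sub, fun hs => hx₀R₂ (hs hx₀R)⟩
      have hR₁3 : 3 ≤ R₁.card := by
        have hsub : ({a, b, x₀} : Finset (Fin n)) ⊆ R₁ := by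
          intro w hw
          simp only [Finset.mem_insert, Finset.mem_singleton] at hw
          rcases hw with rfl | rfl | rfl <;> assumption
        have hcard : ({a, b, x₀} : Finset (Fin n)).card = 3 := by
          rw [Finset.card_insert_of_notMem (by simp [hab, Ne.symm hx₀a]),
            Finset.card_insert_of_notMem (by simp [Ne.symm hx₀b])]
          rfl
        calc 3 = ({a, b, x₀} : Finset (Fin n)).card := hcard.symm
          _ ≤ R₁.card := Finset.card_le_card hsub
      have hR₂3 : 3 ≤ R₂.card := by
        have hsub : ({a, b, y₀} : Finset (Fin n)) ⊆ R₂ := by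
          intro w hw
          simp only [Finset.mem_insert, Finset.mem_singleton] at hw
          rcases hw with rfl | rfl | rfl <;> assumption
        have hcard : ({a, b, y₀} : Finset (Fin n)).card = 3 := by
          rw [Finset.card_insert_of_notMem (by simp [hab, Ne.symm hy₀a]),
            Finset.card_insert_of_notMem (by simp [Ne.symm hy₀b])]
          rfl
        calc 3 = ({a, b, y₀} : Finset (Fin n)).card := hcard.symm
          _ ≤ R₂.card := Finset.card_le_card hsub
      -- F = F₁ ∪ F₂
      have hFun : F = F₁ ∪ F₂ := by
        apply Finset.Subset.antisymm
        · intro e he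
          induction e using Sym2.ind with
          | _ u v =>
            have huR : u ∈ R := hmem _ he u (by simp)
            have hvR : v ∈ R := hmem _ he v (by simp)
            have huv : u ≠ v := by
              intro h; exact hd _ he (by simp [h, Sym2.isDiag_iff_proj_eq])
            have mem12 : ∀ w, w ∈ R → w ∈ R₁ ∨ w ∈ R₂ := by
              intro w hw
              by_cases hwa : w = a
              · subst hwa; exact Or.inl haR₁
              by_cases hwb : w = b
              · subst hwb; exact Or.inl hbR₁
              rcases arc_total hab hwa hwb with h | h
              · left; simp [hR₁def, hw, h]
              · right; simp [hR₂def, hw, h]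
            have strict1 : ∀ w, w ∈ R₁ → w ∉ R₂ → InArc n a b w := by
              intro w hw1 hw2
              simp only [hR₁def, Finset.mem_filter] at hw1
              rcases hw1.2 with rfl | rfl | h
              · exact absurd haR₂ hw2
              · exact absurd hbR₂ hw2
              · exact h
            have strict2 : ∀ w, w ∈ R₂ → w ∉ R₁ → InArc n b a w := by
              intro w hw2 hw1
              simp only [hR₂def, Finset.mem_filter] at hw2
              rcases hw2.2 with rfl | rfl | h
              · exact absurd haR₁ hw1
              · exact absurd hbR₁ hw1
              · exact h
            have goal1 : (u ∈ R₁ ∧ v ∈ R₁) ∨ (u ∈ R₂ ∧ v ∈ R₂) := by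
              rcases mem12 u huR with hu | hu <;> rcases mem12 v hvR with hv | hv
              · exact Or.inl ⟨hu, hv⟩
              · by_cases hv1 : v ∈ R₁
                · exact Or.inl ⟨hu, hv1⟩
                by_cases hu2 : u ∈ R₂
                · exact Or.inr ⟨hu2, hv⟩
                exfalso
                exact hnc e₀ he₀ _ he
                  ⟨a, b, u, v, he₀ab, rfl, strict1 u hu hu2, strict2 v hv hv1⟩
              · by_cases hu1 : u ∈ R₁
                · exact Or.inl ⟨hu1, hv⟩
                by_cases hv2 : v ∈ R₂
                · exact Or.inr ⟨hu, hv2⟩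
                exfalso
                exact hnc e₀ he₀ _ he
                  ⟨a, b, v, u, he₀ab, Sym2.eq_swap, strict1 v hv hv2, strict2 u hu hu1⟩
              · exact Or.inr ⟨hu, hv⟩
            rcases goal1 with ⟨h1, h2⟩ | ⟨h1, h2⟩
            · apply Finset.mem_union_left
              simp only [hF₁def, Finset.mem_filter]
              refine ⟨he, ?_⟩
              intro w hw
              rcases Sym2.mem_iff.mp hw with rfl | rfl <;> assumption
            · apply Finset.mem_union_right
              simp only [hF₂def, Finset.mem_filter]
              refine ⟨he, ?_⟩
              intro w hw
              rcases Sym2.mem_iff.mp hw with rfl | rfl <;> assumption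
        · intro e he
          rcases Finset.mem_union.mp he with h | h
          · exact (Finset.mem_filter.mp h).1
          · exact (Finset.mem_filter.mp h).1
      have hinter : e₀ ∈ F₁ ∩ F₂ := by
        rw [Finset.mem_inter]
        constructor <;> rw [Finset.mem_filter] <;> refine ⟨he₀, ?_⟩ <;>
          intro w hw <;> rw [he₀ab] at hw <;>
          rcases Sym2.mem_iff.mp hw with rfl | rfl <;> assumption
      have hRinter : R₁ ∩ R₂ ⊆ {a, b} := by
        intro w hw
        rw [Finset.mem_inter] at hw
        simp only [hR₁def, hR₂def, Finset.mem_filter] at hw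
        simp only [Finset.mem_insert, Finset.mem_singleton]
        rcases hw.1.2 with rfl | rfl | h1
        · exact Or.inl rfl
        · exact Or.inr rfl
        rcases hw.2.2 with rfl | rfl | h2
        · exact Or.inl rfl
        · exact Or.inr rfl
        exact (arc_antisymm h1 h2).elim
      have hRsum : R₁.card + R₂.card ≤ R.card + 2 := by
        have h1 := Finset.card_union_add_card_inter R₁ R₂
        have h2 : (R₁ ∪ R₂).card ≤ R.card :=
          Finset.card_le_card (Finset.union_subset hR₁sub hR₂sub)
        have h3 : (R₁ ∩ R₂).card ≤ 2 := by
          calc (R₁ ∩ R₂).card ≤ ({a, b} : Finset (Fin n)).card := Finset.card_le_card hRinter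
            _ ≤ 2 := Finset.card_insert_le _ _ |>.trans (by simp)
        omega
      have hIH₁ : F₁.card ≤ 2 * R₁.card - 3 := by
        apply ih R₁.card (by omega) R₁ F₁ rfl (by omega)
        · intro e he; exact hd e (Finset.mem_filter.mp he).1
        · intro e he; exact (Finset.mem_filter.mp he).2
        · intro e he f hf
          exact hnc e (Finset.mem_filter.mp he).1 f (Finset.mem_filter.mp hf).1
      have hIH₂ : F₂.card ≤ 2 * R₂.card - 3 := by
        apply ih R₂.card (by omega) R₂ F₂ rfl (by omega)
        · intro e he; exact hd e (Finset.mem_filter.mp he).1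
        · intro e he; exact (Finset.mem_filter.mp he).2
        · intro e he f hf
          exact hnc e (Finset.mem_filter.mp he).1 f (Finset.mem_filter.mp hf).1
      have hFcard : F.card + (F₁ ∩ F₂).card = F₁.card + F₂.card := by
        rw [hFun]; exact Finset.card_union_add_card_inter F₁ F₂
      have hint1 : 1 ≤ (F₁ ∩ F₂).card := Finset.card_pos.mpr ⟨e₀, hinter⟩
      omega
    · -- boundary-only case
      have hn : 0 < n := by
        obtain ⟨u, hu⟩ := Finset.card_pos.mp (by omega : 0 < R.card)
        exact u.pos
      have key : ∀ e : Sym2 (Fin n), ∃ a : Fin n, e ∈ F →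
          a ∈ R ∧ ∃ b, b ∈ R ∧ e = s(a, b) ∧ a ≠ b ∧ ∀ x ∈ R, ¬ InArc n a b x := by
        intro e
        by_cases he : e ∈ F
        · induction e using Sym2.ind with
          | _ u v =>
            have huR : u ∈ R := hmem _ he u (by simp)
            have hvR : v ∈ R := hmem _ he v (by simp)
            have huv : u ≠ v := by
              intro h; exact hd _ he (by simp [h, Sym2.isDiag_iff_proj_eq])
            have hno : ¬((∃ x ∈ R, InArc n u v x) ∧ (∃ y ∈ R, InArc n v u y)) :=
              fun ⟨hx, hy⟩ => htwo ⟨s(u, v), he, u, v, rfl, hx, hy⟩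
            by_cases h1 : ∃ x ∈ R, InArc n u v x
            · -- then arc (v, u) is R-free
              have h2 : ∀ y ∈ R, ¬ InArc n v u y := by
                intro y hy hyarc
                obtain ⟨x, hxR, hx⟩ := h1
                exact absurd ⟨⟨x, hxR, hx⟩, ⟨y, hy, hyarc⟩⟩ hno
              exact ⟨v, fun _ => ⟨hvR, u, huR, Sym2.eq_swap, Ne.symm huv, h2⟩⟩
            · push_neg at h1
              exact ⟨u, fun _ => ⟨huR, v, hvR, rfl, huv, h1⟩⟩
        · exact ⟨⟨0, hn⟩, fun h => absurd h he⟩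
      have hinj : F.card ≤ R.card := by
        apply Finset.card_le_card_of_injOn (fun e => (key e).choose)
        · intro e he
          exact ((key e).choose_spec he).1
        · intro e₁ h₁ e₂ h₂ heq
          obtain ⟨_, b₁, hb₁R, he₁, hab₁, hfree₁⟩ := (key e₁).choose_spec h₁
          obtain ⟨_, b₂, hb₂R, he₂, hab₂, hfree₂⟩ := (key e₂).choose_spec h₂
          set a := (key e₁).choose with ha
          have heq' : (key e₂).choose = a := heq.symm
          rw [heq'] at he₂ hab₂ hfree₂
          have hbb : b₁ = b₂ := by
            rcases lt_trichotomy ((b₁ - a).val) ((b₂ - a).val) with h | h | h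
            · exact absurd ⟨sub_val_pos (Ne.symm hab₁), h⟩ (hfree₂ b₁ hb₁R)
            · exact sub_val_inj h
            · exact absurd ⟨sub_val_pos (Ne.symm hab₂), h⟩ (hfree₁ b₂ hb₂R)
          rw [he₁, he₂, hbb]
      omega

lemma par_lemma {k : ℕ} {a b x y : Fin k} (h : y - b = a - x)
    (h1 : InArc k a b x) (h2 : InArc k b a y) : False := by
  have ha := a.isLt; have hb := b.isLt; have hx := x.isLt; have hy := y.isLt
  rw [InArc, h] at h2
  rw [InArc] at h1
  simp only [fin_sub_val] at h1 h2
  split_ifs at h1 h2 <;> omega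

lemma mono_inarc {k n : ℕ} {f : Fin k → Fin n} (hf : StrictMono f) {p q x : Fin k}
    (h : InArc n (f p) (f q) (f x)) : InArc k p q x := by
  have hp := p.isLt; have hq := q.isLt; have hx := x.isLt
  have h1 := (f p).isLt; have h2 := (f q).isLt; have h3 := (f x).isLt
  have iff1 : ∀ a b : Fin k, ((f a).val < (f b).val ↔ a.val < b.val) ∧
      ((f a).val = (f b).val ↔ a.val = b.val) := by
    intro a b
    constructor
    · rw [← Fin.lt_def, ← Fin.lt_def]; exact hf.lt_iff_lt
    · constructor
      · intro hh; exact congrArg Fin.val (hf.injective (Fin.ext hh))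
      · intro hh; exact congrArg (fun z => (f z).val) (Fin.ext hh)
  obtain ⟨i1, e1⟩ := iff1 p q
  obtain ⟨i2, e2⟩ := iff1 p x
  obtain ⟨i3, e3⟩ := iff1 x q
  rw [InArc] at h ⊢
  rw [fin_sub_val, fin_sub_val] at h
  rw [fin_sub_val, fin_sub_val]
  split_ifs at h ⊢ <;> omega


/-- Let `G` be a maximal outerplane graph on `Fin n` and let
`R ⊆ Fin n`.  Then there exists a set `M` of pairwise disjoint, pairwise non-crossing
chords, each chord of `M` joining two vertices of `R` and no chord of `M` being an
edge of `G`, such that at most four vertices of `R` are not covered by `M`. -/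
theorem stmt_13 (n : ℕ) (G : SimpleGraph (Fin n)) (hG : IsMOP n G)
    (R : Finset (Fin n)) :
    ∃ M : Finset (Sym2 (Fin n)),
      -- every element of `M` is a chord (two distinct vertices) …
      (∀ e ∈ M, ¬ e.IsDiag) ∧
      -- … joining two vertices of `R`
      (∀ e ∈ M, ∀ v : Fin n, v ∈ e → v ∈ R) ∧
      -- no chord of `M` is an edge of `G`
      (∀ e ∈ M, e ∉ G.edgeSet) ∧
      -- the chords of `M` are pairwise (vertex-)disjoint: `M` is a matching
      (∀ e ∈ M, ∀ f ∈ M, e ≠ f → ∀ v : Fin n, v ∈ e → v ∉ f) ∧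
      -- the chords of `M` are pairwise non-crossing
      (∀ e ∈ M, ∀ f ∈ M, ¬ Cross n e f) ∧
      -- at most four vertices of `R` are not covered by `M`
      (R.filter fun v => ∀ e ∈ M, v ∉ e).card ≤ 4 := by
  classical
  by_cases hk4 : R.card ≤ 4
  · refine ⟨∅, by simp, by simp, by simp, by simp, by simp, ?_⟩
    calc (R.filter fun v => ∀ e ∈ (∅ : Finset (Sym2 (Fin n))), v ∉ e).card
        ≤ R.card := Finset.card_filter_le _ _
      _ ≤ 4 := hk4
  push_neg at hk4
  set k := R.card with hk
  have hk5 : 5 ≤ k := hk4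
  haveI : NeZero k := ⟨by omega⟩
  set r : Fin k ↪o Fin n := R.orderEmbOfFin hk.symm with hrdef
  have hrmono : StrictMono (r : Fin k → Fin n) := r.strictMono
  have hrinj : Function.Injective (r : Fin k → Fin n) := hrmono.injective
  have hrR : ∀ i, r i ∈ R := fun i => Finset.orderEmbOfFin_mem R hk.symm i
  have hrsurj : ∀ v ∈ R, ∃ i, r i = v := by
    intro v hv
    have hrange := Finset.range_orderEmbOfFin R hk.symm
    have hv' : v ∈ Set.range (r : Fin k → Fin n) := by rw [hrange]; exact hv
    exact hv'
  set ψ : Sym2 (Fin k) → Sym2 (Fin n) := Sym2.map (r : Fin k → Fin n) with hψdef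
  have hψinj : Function.Injective ψ := Sym2.map.injective hrinj
  have hψpair : ∀ i j : Fin k, ψ s(i, j) = s(r i, r j) := by
    intro i j; simp [hψdef]
  set F' : Finset (Sym2 (Fin k)) := Finset.univ.filter (fun e' => ψ e' ∈ G.edgeSet) with hF'def
  have hF'G : ∀ e' ∈ F', ψ e' ∈ G.edgeSet := by
    intro e' he'; exact (Finset.mem_filter.mp he').2
  have hF'card : F'.card ≤ 2 * k - 3 := by
    have himg : (F'.image ψ).card = F'.card := Finset.card_image_of_injective _ hψinj
    have hb := nc_bound R.card R (F'.image ψ) rfl (by omega)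
      (by
        intro e he
        rw [Finset.mem_image] at he
        obtain ⟨e', he', rfl⟩ := he
        exact G.not_isDiag_of_mem_edgeSet (hF'G e' he'))
      (by
        intro e he v hv
        rw [Finset.mem_image] at he
        obtain ⟨e', he', rfl⟩ := he
        rw [hψdef, Sym2.mem_map] at hv
        obtain ⟨a, _, rfl⟩ := hv
        exact hrR a)
      (by
        intro e he f hf
        rw [Finset.mem_image] at he hf
        obtain ⟨e', he', rfl⟩ := he
        obtain ⟨f', hf', rfl⟩ := hf
        exact hG.2.2.2.1 _ (hF'G e' he') _ (hF'G f' hf'))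
    rw [himg] at hb
    exact hb
  set esum : Sym2 (Fin k) → Fin k :=
    Sym2.lift ⟨fun a b => a + b, fun a b => add_comm a b⟩ with hesum
  have hesumpair : ∀ i j : Fin k, esum s(i, j) = i + j := fun i j => rfl
  have hfib : ∃ c : Fin k, (F'.filter (fun e' => esum e' = c)).card ≤ 1 := by
    by_contra hcon
    push_neg at hcon
    have hsum : ∑ c : Fin k, (F'.filter (fun e' => esum e' = c)).card = F'.card :=
      (Finset.card_eq_sum_card_fiberwise (fun e' _ => Finset.mem_univ (esum e'))).symm
    have h2k : 2 * k ≤ F'.card := by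
      rw [← hsum]
      calc 2 * k = ∑ _c : Fin k, 2 := by
            simp [Finset.sum_const, Finset.card_univ, mul_comm]
        _ ≤ ∑ c : Fin k, (F'.filter (fun e' => esum e' = c)).card :=
            Finset.sum_le_sum (fun c _ => hcon c)
    omega
  obtain ⟨c, hcfib⟩ := hfib
  set cand : Finset (Sym2 (Fin n)) :=
    (Finset.univ.filter (fun i : Fin k => i + i ≠ c)).image (fun i => s(r i, r (c - i)))
    with hcand
  set M : Finset (Sym2 (Fin n)) := cand.filter (fun e => e ∉ G.edgeSet) with hM
  have hMmem : ∀ e ∈ M, ∃ i : Fin k, i + i ≠ c ∧ e = s(r i, r (c - i)) ∧ e ∉ G.edgeSet := by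
    intro e he
    rw [hM, Finset.mem_filter] at he
    obtain ⟨hc1, hc2⟩ := he
    rw [hcand, Finset.mem_image] at hc1
    obtain ⟨i, hi, hie⟩ := hc1
    exact ⟨i, (Finset.mem_filter.mp hi).2, hie.symm, hc2⟩
  refine ⟨M, ?_, ?_, ?_, ?_, ?_, ?_⟩
  · intro e he
    obtain ⟨i, hic, hie, -⟩ := hMmem e he
    rw [hie]
    simp only [Sym2.isDiag_iff_proj_eq]
    intro hdg
    exact hic (eq_sub_iff_add_eq.mp (hrinj hdg))
  · intro e he v hv
    obtain ⟨i, -, hie, -⟩ := hMmem e he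
    rw [hie] at hv
    rcases Sym2.mem_iff.mp hv with rfl | rfl
    · exact hrR i
    · exact hrR _
  · intro e he
    obtain ⟨i, -, -, h⟩ := hMmem e he
    exact h
  · intro e he f hf hef v hve hvf
    obtain ⟨i, -, hie, -⟩ := hMmem e he
    obtain ⟨j, -, hjf, -⟩ := hMmem f hf
    rw [hie] at hve
    rw [hjf] at hvf
    apply hef
    rw [hie, hjf]
    rcases Sym2.mem_iff.mp hve with rfl | rfl <;>
      rcases Sym2.mem_iff.mp hvf with h1 | h1
    · rw [hrinj h1]
    · have hji : j = c - i := by rw [hrinj h1, sub_sub_cancel]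
      rw [hji, sub_sub_cancel]
      exact Sym2.eq_swap
    · have hji : j = c - i := (hrinj h1).symm
      rw [hji, sub_sub_cancel]
      exact Sym2.eq_swap
    · rw [sub_right_inj.mp (hrinj h1)]
  · intro e he f hf hcross
    obtain ⟨i, -, hie, -⟩ := hMmem e he
    obtain ⟨j, -, hjf, -⟩ := hMmem f hf
    obtain ⟨A, B, C, D, hE, hF, h1, h2⟩ := hcross
    have key : ∀ p q : Fin k, InArc n (r p) (r (c - p)) (r q) →
        InArc n (r (c - p)) (r p) (r (c - q)) → False := by
      intro p q g1 g2
      have m1 := mono_inarc hrmono g1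
      have m2 := mono_inarc hrmono g2
      exact par_lemma (show (c - q) - (c - p) = p - q by abel) m1 m2
    rw [hie] at hE
    rw [hjf] at hF
    rw [Sym2.eq_iff] at hE hF
    rcases hE with ⟨hA, hB⟩ | ⟨hA, hB⟩ <;> rcases hF with ⟨hC, hD⟩ | ⟨hC, hD⟩ <;>
      subst hA <;> subst hB <;> subst hC <;> subst hD
    · exact key i j h1 h2
    · exact key i (c - j) h1 (by rw [sub_sub_cancel]; exact h2)
    · exact key (c - i) j (by rw [sub_sub_cancel]; exact h1)
        (by rw [sub_sub_cancel]; exact h2)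
    · exact key (c - i) (c - j) (by rw [sub_sub_cancel]; exact h1)
        (by rw [sub_sub_cancel, sub_sub_cancel]; exact h2)
  · set B' : Finset (Sym2 (Fin n)) := cand.filter (fun e => e ∈ G.edgeSet) with hB'
    have hBsub : B' ⊆ (F'.filter (fun e' => esum e' = c)).image ψ := by
      intro e he
      rw [hB', Finset.mem_filter] at he
      obtain ⟨hec, heG⟩ := he
      rw [hcand, Finset.mem_image] at hec
      obtain ⟨i, hi, hie⟩ := hec
      rw [Finset.mem_image]
      refine ⟨s(i, c - i), ?_, ?_⟩
      · rw [Finset.mem_filter]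
        constructor
        · rw [hF'def, Finset.mem_filter]
          refine ⟨Finset.mem_univ _, ?_⟩
          rw [hψpair, hie]
          exact heG
        · rw [hesumpair]
          abel
      · rw [hψpair, hie]
    have hBcard : B'.card ≤ 1 :=
      le_trans (Finset.card_le_card hBsub) (le_trans Finset.card_image_le hcfib)
    set S : Finset (Fin k) := Finset.univ.filter (fun i : Fin k => i + i = c) with hS
    have hScard : S.card ≤ 2 := by
      have hmap : ∀ i ∈ S, i.val ∈ ({c.val / 2, (c.val + k) / 2} : Finset ℕ) := by
        intro i hi
        rw [hS, Finset.mem_filter] at hi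
        have hval : (i.val + i.val) % k = c.val := by
          have := congrArg Fin.val hi.2
          rwa [Fin.val_add] at this
        have hik := i.isLt
        have hck := c.isLt
        simp only [Finset.mem_insert, Finset.mem_singleton]
        by_cases hcase : i.val + i.val < k
        · rw [Nat.mod_eq_of_lt hcase] at hval; omega
        · have h1 : (i.val + i.val) % k = i.val + i.val - k := by
            rw [Nat.mod_eq_sub_mod (by omega)]
            exact Nat.mod_eq_of_lt (by omega)
          rw [h1] at hval; omega
      calc S.card ≤ ({c.val / 2, (c.val + k) / 2} : Finset ℕ).card :=
            Finset.card_le_card_of_injOn Fin.val hmap (fun a _ b _ h => Fin.ext h)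
        _ ≤ 2 := le_trans (Finset.card_insert_le _ _) (by simp)
    set Fix : Finset (Fin n) := S.image (fun i => (r i : Fin n)) with hFix
    have hFixcard : Fix.card ≤ 2 := le_trans Finset.card_image_le hScard
    have hsubU : ∀ T : Finset (Fin n), (∀ e ∈ B', ∀ v ∈ e, v ∈ T) →
        (R.filter fun v => ∀ e ∈ M, v ∉ e) ⊆ Fix ∪ T := by
      intro T hT v hv
      rw [Finset.mem_filter] at hv
      obtain ⟨hvR, hvunc⟩ := hv
      obtain ⟨iv, hiv⟩ := hrsurj v hvR
      by_cases hfx : iv + iv = c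
      · apply Finset.mem_union_left
        rw [hFix, Finset.mem_image]
        exact ⟨iv, by rw [hS]; simp [hfx], hiv⟩
      · have hecand : s(r iv, r (c - iv)) ∈ cand := by
          rw [hcand, Finset.mem_image]
          exact ⟨iv, by simp [hfx], rfl⟩
        by_cases heG : s(r iv, r (c - iv)) ∈ G.edgeSet
        · apply Finset.mem_union_right
          refine hT s(r iv, r (c - iv)) ?_ v ?_
          · rw [hB', Finset.mem_filter]; exact ⟨hecand, heG⟩
          · exact Sym2.mem_iff.mpr (Or.inl hiv.symm)
        · exfalso
          refine hvunc s(r iv, r (c - iv)) ?_ ?_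
          · rw [hM, Finset.mem_filter]; exact ⟨hecand, heG⟩
          · exact Sym2.mem_iff.mpr (Or.inl hiv.symm)
    rcases Nat.le_one_iff_eq_zero_or_eq_one.mp hBcard with hB0 | hB1
    · have hBempty : B' = ∅ := Finset.card_eq_zero.mp hB0
      have hsub := hsubU ∅ (by rw [hBempty]; intro e he; exact absurd he (Finset.notMem_empty e))
      calc (R.filter fun v => ∀ e ∈ M, v ∉ e).card
          ≤ (Fix ∪ ∅).card := Finset.card_le_card hsub
        _ = Fix.card := by rw [Finset.union_empty]
        _ ≤ 4 := by omega
    · obtain ⟨e₀, he₀⟩ := Finset.card_eq_one.mp hB1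
      have he₀B : e₀ ∈ B' := by rw [he₀]; exact Finset.mem_singleton_self e₀
      have he₀c : e₀ ∈ cand := by
        rw [hB', Finset.mem_filter] at he₀B
        exact he₀B.1
      rw [hcand, Finset.mem_image] at he₀c
      obtain ⟨i₀, -, hi₀e⟩ := he₀c
      have hsub := hsubU {r i₀, r (c - i₀)} (by
        intro e he v hv
        have heq : e = e₀ := by
          rw [he₀] at he
          exact Finset.mem_singleton.mp he
        rw [heq, ← hi₀e] at hv
        rcases Sym2.mem_iff.mp hv with rfl | rfl
        · exact Finset.mem_insert_self _ _
        · exact Finset.mem_insert_of_mem (Finset.mem_singleton_self _))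
      calc (R.filter fun v => ∀ e ∈ M, v ∉ e).card
          ≤ (Fix ∪ {r i₀, r (c - i₀)}).card := Finset.card_le_card hsub
        _ ≤ Fix.card + ({r i₀, r (c - i₀)} : Finset (Fin n)).card := Finset.card_union_le _ _
        _ ≤ 2 + 2 := add_le_add hFixcard (le_trans (Finset.card_insert_le _ _) (by simp))
        _ ≤ 4 := by omega
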